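/- Let E be a finite dimensional subspace of a real Banach lattice X. If E does phase retrieval (|f|=|g| for f,g ∈ E implies f = ±g), then E does stable phase retrieval: there exists C ≥ 1 such that for all f,g ∈ E, min(‖f-g‖, ‖f+g‖) ≤ C‖|f|-|g|‖. -/

import Mathlib

open Filter Topology

section AuxLattice

variable {X : Type*} [NormedAddCommGroup X] [Lattice X] [HasSolidNorm X]
    [IsOrderedAddMonoid X]

private lemma abs_def' (x : X) : |x| = x ⊔ -x := rfl

/-- The key lattice identity: `|f - g| ⊓ |f + g| = ||f| - |g||`. -/
private lemma inf_abs_sub_abs_add (f g : X) : |f - g| ⊓ |f + g| = |(|f| - |g|)| := by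
  letI : DistribLattice X := AddCommGroup.toDistribLattice X
  have neg_abs' : ∀ y : X, y ⊓ -y = -|y| := by
    intro y
    rw [abs_def', neg_sup, neg_neg, inf_comm]
  have h1 : (f - g) ⊓ (f + g) = f - |g| := by
    rw [sub_eq_add_neg, ← add_inf, inf_comm (-g) g, neg_abs', ← sub_eq_add_neg]
  have h2 : (f - g) ⊓ (-f - g) = -g - |f| := by
    rw [show f - g = -g + f by abel, show -f - g = -g + -f by abel, ← add_inf, neg_abs',
      ← sub_eq_add_neg]
  have h3 : (g - f) ⊓ (f + g) = g - |f| := by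
    rw [sub_eq_add_neg g f, add_comm f g, ← add_inf, inf_comm (-f) f, neg_abs',
      ← sub_eq_add_neg]
  have h4 : (g - f) ⊓ (-f - g) = -f - |g| := by
    rw [show g - f = -f + g by abel, show -f - g = -f + -g by abel, ← add_inf, neg_abs',
      ← sub_eq_add_neg]
  calc |f - g| ⊓ |f + g|
      = ((f - g) ⊔ (g - f)) ⊓ ((f + g) ⊔ (-f - g)) := by
        rw [abs_def' (f - g), abs_def' (f + g), neg_sub, show -(f + g) = -f - g by abel]
    _ = ((f - g) ⊓ ((f + g) ⊔ (-f - g))) ⊔ ((g - f) ⊓ ((f + g) ⊔ (-f - g))) := inf_sup_right _ _ _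
    _ = (((f - g) ⊓ (f + g)) ⊔ ((f - g) ⊓ (-f - g))) ⊔
          (((g - f) ⊓ (f + g)) ⊔ ((g - f) ⊓ (-f - g))) := by rw [inf_sup_left, inf_sup_left]
    _ = ((f - |g|) ⊔ (-g - |f|)) ⊔ ((g - |f|) ⊔ (-f - |g|)) := by rw [h1, h2, h3, h4]
    _ = ((f - |g|) ⊔ (-f - |g|)) ⊔ ((g - |f|) ⊔ (-g - |f|)) := by ac_rfl
    _ = ((f ⊔ -f) - |g|) ⊔ ((g ⊔ -g) - |f|) := by rw [sup_sub, sup_sub]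
    _ = (|f| - |g|) ⊔ (|g| - |f|) := rfl
    _ = |(|f| - |g|)| := by rw [abs_def' (|f| - |g|), neg_sub]

private lemma easy_le (f g : X) : |(|f| - |g|)| ≤ |f - g| ⊓ |f + g| := by
  rw [inf_abs_sub_abs_add]

private lemma nonneg_of_two_pow_nsmul_nonneg (k : ℕ) (y : X) (h : 0 ≤ 2 ^ k • y) : 0 ≤ y := by
  induction k generalizing y with
  | zero => simpa using h
  | succ n ih =>
    have h2 : (0 : X) ≤ 2 • y := by
      apply ih
      rwa [← mul_nsmul, mul_comm, ← pow_succ] 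
    exact nsmul_two_semiclosed h2

variable [NormedSpace ℝ X]

private lemma real_smul_nonneg {r : ℝ} (hr : 0 ≤ r) {x : X} (hx : 0 ≤ x) : 0 ≤ r • x := by
  have key : ∀ k : ℕ, (0 : X) ≤ ((⌊r * 2 ^ k⌋₊ : ℝ) / 2 ^ k) • x := by
    intro k
    have h2k : (0:ℝ) < 2 ^ k := by positivity
    have hy : (0 : X) ≤ ((2:ℝ) ^ k)⁻¹ • x := by
      apply nonneg_of_two_pow_nsmul_nonneg k
      have : (2 ^ k : ℕ) • ((2:ℝ) ^ k)⁻¹ • x = x := by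
        rw [← Nat.cast_smul_eq_nsmul ℝ, smul_smul]
        push_cast
        rw [mul_inv_cancel₀ h2k.ne', one_smul]
      rw [this]; exact hx
    have : ((⌊r * 2 ^ k⌋₊ : ℝ) / 2 ^ k) • x = ⌊r * 2 ^ k⌋₊ • (((2:ℝ) ^ k)⁻¹ • x) := by
      rw [← Nat.cast_smul_eq_nsmul ℝ, smul_smul, div_eq_mul_inv]
    rw [this]
    exact nsmul_nonneg hy _
  have htend : Tendsto (fun k : ℕ => ((⌊r * 2 ^ k⌋₊ : ℝ) / 2 ^ k) • x) atTop (𝓝 (r • x)) := by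
    apply Tendsto.smul_const
    exact (tendsto_nat_floor_mul_div_atTop hr).comp
      (tendsto_pow_atTop_atTop_of_one_lt (by norm_num : (1:ℝ) < 2))
  exact isClosed_nonneg.mem_of_tendsto htend (Filter.Eventually.of_forall key)

private lemma real_smul_mono {r : ℝ} (hr : 0 ≤ r) {x y : X} (h : x ≤ y) : r • x ≤ r • y := by
  have := real_smul_nonneg hr (sub_nonneg.mpr h)
  rwa [smul_sub, sub_nonneg] at this

private lemma abs_real_smul {r : ℝ} (hr : 0 ≤ r) (x : X) : |r • x| = r • |x| := by
  rcases hr.eq_or_lt with h | h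
  · simp [← h]
  have le_aux : ∀ (s : ℝ), 0 ≤ s → ∀ z : X, |s • z| ≤ s • |z| := by
    intro s hs z
    rw [abs_def' (s • z)]
    refine sup_le (real_smul_mono hs (le_abs_self z)) ?_
    rw [← smul_neg]
    exact real_smul_mono hs (neg_le_abs z)
  refine le_antisymm (le_aux r hr x) ?_
  have h2 := le_aux r⁻¹ (by positivity) (r • x)
  rw [smul_smul, inv_mul_cancel₀ h.ne', one_smul] at h2
  calc r • |x| ≤ r • (r⁻¹ • |r • x|) := real_smul_mono hr h2
    _ = |r • x| := by rw [smul_smul, mul_inv_cancel₀ h.ne', one_smul]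

private lemma real_smul_inf {r : ℝ} (hr : 0 < r) (x y : X) :
    r • (x ⊓ y) = (r • x) ⊓ (r • y) := by
  refine le_antisymm (le_inf (real_smul_mono hr.le inf_le_left)
    (real_smul_mono hr.le inf_le_right)) ?_
  have h1 : r⁻¹ • ((r • x) ⊓ (r • y)) ≤ x ⊓ y := by
    refine le_inf ?_ ?_
    · have := real_smul_mono (by positivity : (0:ℝ) ≤ r⁻¹) (inf_le_left (a := r • x) (b := r • y))
      rwa [smul_smul, inv_mul_cancel₀ hr.ne', one_smul] at this
    · have := real_smul_mono (by positivity : (0:ℝ) ≤ r⁻¹) (inf_le_right (a := r • x) (b := r • y))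
      rwa [smul_smul, inv_mul_cancel₀ hr.ne', one_smul] at this
  have := real_smul_mono hr.le h1
  rwa [smul_smul, mul_inv_cancel₀ hr.ne', one_smul] at this

end AuxLattice

/-- In a finite dimensional subspace of a real Banach lattice, phase retrieval implies
stable phase retrieval. -/
theorem stablePhaseRetrieval_of_phaseRetrieval_finiteDimensional {X : Type*}
    [NormedAddCommGroup X] [Lattice X] [HasSolidNorm X]
    [IsOrderedAddMonoid X] [NormedSpace ℝ X] (E : Submodule ℝ X)
    [FiniteDimensional ℝ E]
    (hPR : ∀ f ∈ E, ∀ g ∈ E, |f| = |g| → f = g ∨ f = -g) :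
    ∃ C : ℝ, 1 ≤ C ∧ ∀ f ∈ E, ∀ g ∈ E, min ‖f - g‖ ‖f + g‖ ≤ C * ‖|f| - |g|‖ := by
  by_cases hE : (Metric.sphere (0 : E) 1).Nonempty
  swap
  · -- E is trivial
    have hzero : ∀ f ∈ E, f = 0 := by
      intro f hf
      by_contra hne
      apply hE
      refine ⟨‖f‖⁻¹ • ⟨f, hf⟩, ?_⟩
      have hfn : ‖(⟨f, hf⟩ : E)‖ = ‖f‖ := rfl
      rw [mem_sphere_zero_iff_norm, norm_smul, hfn, norm_inv, Real.norm_eq_abs,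
        abs_of_nonneg (norm_nonneg f), inv_mul_cancel₀ (norm_ne_zero_iff.mpr hne)]
    refine ⟨1, le_refl 1, fun f hf g hg => ?_⟩
    rw [hzero f hf, hzero g hg]
    simp
  -- Main case: get the minimum of F on the product of spheres
  set F : E × E → ℝ := fun p => ‖|((p.1 : X))| ⊓ |((p.2 : X))|‖ with hF
  have hFcont : Continuous F := by
    have c1 : Continuous fun p : E × E => ((p.1 : X)) := continuous_subtype_val.comp continuous_fst
    have c2 : Continuous fun p : E × E => ((p.2 : X)) := continuous_subtype_val.comp continuous_snd
    have a1 : Continuous fun p : E × E => |((p.1 : X))| := c1.sup c1.neg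
    have a2 : Continuous fun p : E × E => |((p.2 : X))| := c2.sup c2.neg
    exact continuous_norm.comp (a1.inf a2)
  have hScomp : IsCompact ((Metric.sphere (0 : E) 1) ×ˢ (Metric.sphere (0 : E) 1)) :=
    (isCompact_sphere _ _).prod (isCompact_sphere _ _)
  obtain ⟨p0, hp0, hmin'⟩ := hScomp.exists_isMinOn (hE.prod hE) hFcont.continuousOn
  have hmin : ∀ q ∈ (Metric.sphere (0 : E) 1) ×ˢ (Metric.sphere (0 : E) 1), F p0 ≤ F q :=
    fun q hq => hmin' hq
  set δ := F p0 with hδdef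
  have hδnn : 0 ≤ δ := norm_nonneg _
  have hδpos : 0 < δ := by
    rcases hδnn.eq_or_lt with h | h
    · exfalso
      obtain ⟨a, b⟩ := p0
      obtain ⟨ha, hb⟩ := Set.mem_prod.mp hp0
      rw [mem_sphere_zero_iff_norm] at ha hb
      have hzero : |((a : X))| ⊓ |((b : X))| = 0 := by
        have := h.symm
        rw [hδdef, hF] at this
        exact norm_eq_zero.mp this
      -- consider f = a + b, g = a - b
      have hfE : (a : X) + (b : X) ∈ E := add_mem (SetLike.coe_mem a) (SetLike.coe_mem b)
      have hgE : (a : X) - (b : X) ∈ E := sub_mem (SetLike.coe_mem a) (SetLike.coe_mem b)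
      have habs : |((a : X) + b)| = |((a : X) - b)| := by
        have hle : |(|((a : X) + b)| - |((a : X) - b)|)| ≤ 0 := by
          have h1 : |(|((a : X) + b)| - |((a : X) - b)|)| ≤
              |((a : X) + b - ((a : X) - b))| ⊓ |((a : X) + b + ((a : X) - b))| :=
            easy_le _ _
          have e1 : (a : X) + b - ((a : X) - b) = (2 : ℝ) • (b : X) := by
            rw [two_smul]; abel
          have e2 : (a : X) + b + ((a : X) - b) = (2 : ℝ) • (a : X) := by
            rw [two_smul]; abel
          rw [e1, e2, abs_real_smul (by norm_num : (0:ℝ) ≤ 2),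
            abs_real_smul (by norm_num : (0:ℝ) ≤ 2),
            ← real_smul_inf (by norm_num : (0:ℝ) < 2), inf_comm (|(b : X)|) (|(a : X)|),
            hzero, smul_zero] at h1
          exact h1
        have hd1 : |((a : X) + b)| - |((a : X) - b)| ≤ 0 := le_trans (le_abs_self _) hle
        have hd2 : (0 : X) ≤ |((a : X) + b)| - |((a : X) - b)| :=
          neg_nonpos.mp (le_trans (neg_le_abs _) hle)
        exact sub_eq_zero.mp (le_antisymm hd1 hd2)
      rcases hPR _ hfE _ hgE habs with hcase | hcase
      · -- a + b = a - b, so 2b = 0, so b = 0, contradicting ‖b‖ = 1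
        have : (2 : ℝ) • (b : X) = 0 := by
          rw [two_smul]
          have : (b : X) + b = (a : X) + b - ((a : X) - b) := by abel
          rw [this, hcase, sub_self]
        have hb0 : (b : X) = 0 := by
          have := smul_eq_zero.mp this
          rcases this with h' | h'
          · norm_num at h'
          · exact h'
        rw [show ‖b‖ = ‖(b : X)‖ from rfl, hb0, norm_zero] at hb
        norm_num at hb
      · -- a + b = -(a - b), so 2a = 0, so a = 0, contradicting ‖a‖ = 1
        have : (2 : ℝ) • (a : X) = 0 := by
          rw [two_smul]
          have : (a : X) + a = (a : X) + b + ((a : X) - b) := by abel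
          rw [this, hcase]; abel
        have ha0 : (a : X) = 0 := by
          have := smul_eq_zero.mp this
          rcases this with h' | h'
          · norm_num at h'
          · exact h'
        rw [show ‖a‖ = ‖(a : X)‖ from rfl, ha0, norm_zero] at ha
        norm_num at ha
    · exact h
  refine ⟨max 1 δ⁻¹, le_max_left _ _, ?_⟩
  have hCpos : 0 < max 1 δ⁻¹ := lt_of_lt_of_le one_pos (le_max_left _ _)
  -- Key estimate assuming ‖f - g‖ ≤ ‖f + g‖
  have key : ∀ f ∈ E, ∀ g ∈ E, ‖f - g‖ ≤ ‖f + g‖ →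
      ‖f - g‖ ≤ max 1 δ⁻¹ * ‖|f| - |g|‖ := by
    intro f hf g hg hle
    by_cases hfg : f - g = 0
    · rw [hfg, norm_zero]
      positivity
    have ht : 0 < ‖f - g‖ := norm_pos_iff.mpr hfg
    have hs : 0 < ‖f + g‖ := lt_of_lt_of_le ht hle
    set t := ‖f - g‖ with htdef
    set s := ‖f + g‖ with hsdef
    set u : E := ⟨t⁻¹ • (f - g), Submodule.smul_mem E _ (sub_mem hf hg)⟩ with hu
    set v : E := ⟨s⁻¹ • (f + g), Submodule.smul_mem E _ (add_mem hf hg)⟩ with hv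
    have hun : u ∈ Metric.sphere (0 : E) 1 := by
      rw [mem_sphere_zero_iff_norm]
      show ‖t⁻¹ • (f - g)‖ = 1
      rw [norm_smul, norm_inv, Real.norm_eq_abs, abs_of_pos ht, inv_mul_cancel₀ ht.ne']
    have hvn : v ∈ Metric.sphere (0 : E) 1 := by
      rw [mem_sphere_zero_iff_norm]
      show ‖s⁻¹ • (f + g)‖ = 1
      rw [norm_smul, norm_inv, Real.norm_eq_abs, abs_of_pos hs, inv_mul_cancel₀ hs.ne']
    have hδle : δ ≤ ‖|t⁻¹ • (f - g)| ⊓ |s⁻¹ • (f + g)|‖ :=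
      hmin (u, v) (Set.mem_prod.mpr ⟨hun, hvn⟩)
    set w : X := |t⁻¹ • (f - g)| ⊓ |s⁻¹ • (f + g)| with hw
    have hwnn : 0 ≤ w := le_inf (abs_nonneg _) (abs_nonneg _)
    have h1 : t • w ≤ |f - g| := by
      calc t • w ≤ t • |t⁻¹ • (f - g)| := real_smul_mono ht.le inf_le_left
        _ = t • (t⁻¹ • |f - g|) := by rw [abs_real_smul (by positivity : (0:ℝ) ≤ t⁻¹)]
        _ = |f - g| := by rw [smul_smul, mul_inv_cancel₀ ht.ne', one_smul]
    have h2 : t • w ≤ |f + g| := by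
      have hts : t • w ≤ s • w := by
        have : (0 : X) ≤ (s - t) • w := real_smul_nonneg (by linarith) hwnn
        rw [sub_smul, sub_nonneg] at this
        exact this
      calc t • w ≤ s • w := hts
        _ ≤ s • |s⁻¹ • (f + g)| := real_smul_mono hs.le inf_le_right
        _ = s • (s⁻¹ • |f + g|) := by rw [abs_real_smul (by positivity : (0:ℝ) ≤ s⁻¹)]
        _ = |f + g| := by rw [smul_smul, mul_inv_cancel₀ hs.ne', one_smul]
    have h3 : t • w ≤ |(|f| - |g|)| := by
      rw [← inf_abs_sub_abs_add]
      exact le_inf h1 h2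
    have h4 : ‖t • w‖ ≤ ‖|f| - |g|‖ := by
      apply norm_le_norm_of_abs_le_abs
      rwa [abs_of_nonneg (real_smul_nonneg ht.le hwnn)]
    have h5 : ‖t • w‖ = t * ‖w‖ := by
      rw [norm_smul, Real.norm_eq_abs, abs_of_pos ht]
    have hδw : δ ≤ ‖w‖ := hδle
    have hfinal : t ≤ δ⁻¹ * ‖|f| - |g|‖ := by
      rw [h5] at h4
      rw [inv_mul_eq_div, le_div_iff₀ hδpos]
      nlinarith [mul_le_mul_of_nonneg_left hδw ht.le]
    calc t ≤ δ⁻¹ * ‖|f| - |g|‖ := hfinal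
      _ ≤ max 1 δ⁻¹ * ‖|f| - |g|‖ :=
        mul_le_mul_of_nonneg_right (le_max_right _ _) (norm_nonneg _)
  intro f hf g hg
  rcases le_total ‖f - g‖ ‖f + g‖ with h | h
  · exact le_trans (min_le_left _ _) (key f hf g hg h)
  · have := key f hf (-g) (neg_mem hg) (by rwa [sub_neg_eq_add, ← sub_eq_add_neg])
    rw [sub_neg_eq_add, abs_neg] at this
    exact le_trans (min_le_right _ _) this
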